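/- Fix θ > 0 and define f : [0, ∞) → ℝ by the everywhere-convergent power series f(x) = Σ_{n=0}^{∞} x^{2n+1} / ( n! · θ^n · √((n+1)θ) ). Then for every x ≥ 0, e^{−x²/θ} f(x) ≤ ∫₀^{∞} (√θ / t²) (1 − e^{−t²/θ}) dt; in particular, the function x ↦ e^{−x²/θ} f(x) is bounded on [0, ∞). -/

import Mathlib

set_option maxHeartbeats 1000000

open MeasureTheory

section VortexAux
open Real Set

lemma vortex_integrand_bounds (θ : ℝ) (hθ : 0 < θ) (t : ℝ) (ht : 0 < t) :
    0 ≤ (Real.sqrt θ / t ^ 2) * (1 - Real.exp (-t ^ 2 / θ)) ∧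
    (Real.sqrt θ / t ^ 2) * (1 - Real.exp (-t ^ 2 / θ)) ≤ 1 / Real.sqrt θ ∧
    (Real.sqrt θ / t ^ 2) * (1 - Real.exp (-t ^ 2 / θ)) ≤ Real.sqrt θ / t ^ 2 := by
  have hsq : Real.sqrt θ * Real.sqrt θ = θ := Real.mul_self_sqrt hθ.le
  have hspos : 0 < Real.sqrt θ := Real.sqrt_pos.2 hθ
  have h1 : Real.exp (-t ^ 2 / θ) ≤ 1 := by
    rw [Real.exp_le_one_iff]
    exact div_nonpos_of_nonpos_of_nonneg (neg_nonpos.2 (sq_nonneg t)) hθ.le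
  have h0 : 0 ≤ 1 - Real.exp (-t ^ 2 / θ) := by linarith
  have hup : 1 - Real.exp (-t ^ 2 / θ) ≤ t ^ 2 / θ := by
    have h := Real.add_one_le_exp (-(t ^ 2 / θ))
    have hd : -t ^ 2 / θ = -(t ^ 2 / θ) := by ring
    rw [hd]
    linarith
  refine ⟨mul_nonneg (by positivity) h0, ?_, ?_⟩
  · calc (Real.sqrt θ / t ^ 2) * (1 - Real.exp (-t ^ 2 / θ))
        ≤ (Real.sqrt θ / t ^ 2) * (t ^ 2 / θ) := mul_le_mul_of_nonneg_left hup (by positivity)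
      _ = 1 / Real.sqrt θ := by field_simp; exact Real.sq_sqrt hθ.le
  · calc (Real.sqrt θ / t ^ 2) * (1 - Real.exp (-t ^ 2 / θ))
        ≤ (Real.sqrt θ / t ^ 2) * 1 :=
          mul_le_mul_of_nonneg_left (by linarith [Real.exp_pos (-t ^ 2 / θ)]) (by positivity)
      _ = _ := mul_one _

lemma vortex_integrand_integrable (θ : ℝ) (hθ : 0 < θ) :
    IntegrableOn (fun t : ℝ => (Real.sqrt θ / t ^ 2) * (1 - Real.exp (-t ^ 2 / θ)))
      (Set.Ioi (0:ℝ)) := by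
  have hmble : AEStronglyMeasurable
      (fun t : ℝ => (Real.sqrt θ / t ^ 2) * (1 - Real.exp (-t ^ 2 / θ))) volume := by
    apply Measurable.aestronglyMeasurable; fun_prop
  have hnormeq : ∀ t : ℝ, 0 < t →
      ‖(Real.sqrt θ / t ^ 2) * (1 - Real.exp (-t ^ 2 / θ))‖
        = (Real.sqrt θ / t ^ 2) * (1 - Real.exp (-t ^ 2 / θ)) := fun t ht => by
    rw [Real.norm_eq_abs, abs_of_nonneg (vortex_integrand_bounds θ hθ t ht).1]
  rw [← Set.Ioc_union_Ioi_eq_Ioi (zero_le_one' ℝ)]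
  apply IntegrableOn.union
  · apply Measure.integrableOn_of_bounded (M := 1 / Real.sqrt θ) measure_Ioc_lt_top.ne hmble
    filter_upwards [ae_restrict_mem measurableSet_Ioc] with t ht
    rw [hnormeq t ht.1]
    exact (vortex_integrand_bounds θ hθ t ht.1).2.1
  · have hbase : IntegrableOn (fun t : ℝ => Real.sqrt θ * t ^ (-2 : ℝ)) (Set.Ioi (1:ℝ)) :=
      (integrableOn_Ioi_rpow_of_lt (by norm_num) one_pos).const_mul _
    apply Integrable.mono' hbase hmble.restrict
    filter_upwards [ae_restrict_mem measurableSet_Ioi] with t ht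
    have ht0 : (0:ℝ) < t := lt_trans one_pos ht
    rw [hnormeq t ht0]
    have heq : Real.sqrt θ * t ^ (-2 : ℝ) = Real.sqrt θ / t ^ 2 := by
      rw [Real.rpow_neg ht0.le, ← Real.rpow_natCast t 2, div_eq_mul_inv]
      norm_num
    rw [heq]
    exact (vortex_integrand_bounds θ hθ t ht0).2.2

lemma vortex_integral_ge_one (θ : ℝ) (hθ : 0 < θ) :
    1 ≤ ∫ t in Set.Ioi (0:ℝ), (Real.sqrt θ / t ^ 2) * (1 - Real.exp (-t ^ 2 / θ)) := by
  have hsq : Real.sqrt θ * Real.sqrt θ = θ := Real.mul_self_sqrt hθ.le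
  have hspos : 0 < Real.sqrt θ := Real.sqrt_pos.2 hθ
  set b : ℝ := Real.sqrt 3 * Real.sqrt θ with hbdef
  have hb : 0 < b := mul_pos (Real.sqrt_pos.2 (by norm_num)) hspos
  -- the comparison function
  have hhc : Continuous (fun t : ℝ => Real.sqrt θ / (θ + t ^ 2)) := by
    apply continuous_const.div (continuous_const.add (continuous_pow 2))
    intro t; exact (add_pos_of_pos_of_nonneg hθ (sq_nonneg t)).ne'
  have hderiv : ∀ t : ℝ, HasDerivAt (fun s : ℝ => Real.arctan (s / Real.sqrt θ))
      (Real.sqrt θ / (θ + t ^ 2)) t := by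
    intro t
    have h1 : HasDerivAt (fun s : ℝ => s / Real.sqrt θ) (1 / Real.sqrt θ) t := by
      simpa using (hasDerivAt_id t).div_const (Real.sqrt θ)
    have h2 := (Real.hasDerivAt_arctan (t / Real.sqrt θ)).comp t h1
    refine (h2 : HasDerivAt (fun s : ℝ => Real.arctan (s / Real.sqrt θ)) _ t).congr_deriv ?_
    have h3 : Real.sqrt θ ^ 2 = θ := Real.sq_sqrt hθ.le
    field_simp
    nlinarith [hsq]
  -- exact value of the interval integral of the comparison function
  have hval : ∫ t in (0:ℝ)..b, Real.sqrt θ / (θ + t ^ 2) = π / 3 := by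
    rw [intervalIntegral.integral_eq_sub_of_hasDerivAt (fun t _ => hderiv t)
      (hhc.intervalIntegrable 0 b)]
    have hb' : b / Real.sqrt θ = Real.sqrt 3 := by
      rw [hbdef, mul_div_assoc, div_self hspos.ne', mul_one]
    rw [hb', zero_div, Real.arctan_zero, sub_zero, ← Real.tan_pi_div_three,
      Real.arctan_tan (by linarith [Real.pi_pos]) (by linarith [Real.pi_pos])]
  have hpi : 1 ≤ π / 3 := by linarith [Real.pi_gt_three]
  -- compare on Ioc 0 b
  have hint : IntegrableOn (fun t : ℝ => (Real.sqrt θ / t ^ 2) * (1 - Real.exp (-t ^ 2 / θ)))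
      (Set.Ioi (0:ℝ)) := vortex_integrand_integrable θ hθ
  have hmono : ∫ t in Set.Ioc (0:ℝ) b, Real.sqrt θ / (θ + t ^ 2)
      ≤ ∫ t in Set.Ioc (0:ℝ) b, (Real.sqrt θ / t ^ 2) * (1 - Real.exp (-t ^ 2 / θ)) := by
    apply setIntegral_mono_on (hhc.integrableOn_Ioc) (hint.mono_set Set.Ioc_subset_Ioi_self)
      measurableSet_Ioc
    intro t ht
    have ht0 : 0 < t := ht.1
    have hexp : Real.exp (-t ^ 2 / θ) ≤ θ / (θ + t ^ 2) := by
      have h := Real.add_one_le_exp (t ^ 2 / θ)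
      have hpos : (0:ℝ) < 1 + t ^ 2 / θ := by positivity
      have hinv : Real.exp (-(t ^ 2 / θ)) ≤ 1 / (1 + t ^ 2 / θ) := by
        rw [Real.exp_neg, ← one_div]
        apply one_div_le_one_div_of_le hpos
        linarith
      have hd : -t ^ 2 / θ = -(t ^ 2 / θ) := by ring
      rw [hd]
      calc Real.exp (-(t ^ 2 / θ)) ≤ 1 / (1 + t ^ 2 / θ) := hinv
        _ = θ / (θ + t ^ 2) := by field_simp
    have hstep : t ^ 2 / (θ + t ^ 2) ≤ 1 - Real.exp (-t ^ 2 / θ) := by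
      have : t ^ 2 / (θ + t ^ 2) = 1 - θ / (θ + t ^ 2) := by field_simp; ring
      rw [this]
      linarith
    calc Real.sqrt θ / (θ + t ^ 2)
        = (Real.sqrt θ / t ^ 2) * (t ^ 2 / (θ + t ^ 2)) := by
          field_simp
      _ ≤ (Real.sqrt θ / t ^ 2) * (1 - Real.exp (-t ^ 2 / θ)) :=
          mul_le_mul_of_nonneg_left hstep (by positivity)
  have hsubset : ∫ t in Set.Ioc (0:ℝ) b, (Real.sqrt θ / t ^ 2) * (1 - Real.exp (-t ^ 2 / θ))
      ≤ ∫ t in Set.Ioi (0:ℝ), (Real.sqrt θ / t ^ 2) * (1 - Real.exp (-t ^ 2 / θ)) := by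
    apply setIntegral_mono_set hint
    · filter_upwards [ae_restrict_mem measurableSet_Ioi] with t ht
      exact (vortex_integrand_bounds θ hθ t ht).1
    · exact HasSubset.Subset.eventuallyLE Set.Ioc_subset_Ioi_self
  have heq : ∫ t in Set.Ioc (0:ℝ) b, Real.sqrt θ / (θ + t ^ 2)
      = ∫ t in (0:ℝ)..b, Real.sqrt θ / (θ + t ^ 2) :=
    (intervalIntegral.integral_of_le hb.le).symm
  linarith [hmono, hsubset, heq ▸ hval ▸ hpi]

lemma vortex_term_bound (θ : ℝ) (hθ : 0 < θ) (x : ℝ) (hx : 0 ≤ x) (n : ℕ) :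
    Real.exp (-x ^ 2 / θ) *
      (x ^ (2 * n + 1) / ((n.factorial : ℝ) * θ ^ n * Real.sqrt ((n + 1) * θ)))
    ≤ ((x ^ 2 / θ) ^ n / (n.factorial : ℝ) * Real.exp (-(x ^ 2 / θ))
       + (x ^ 2 / θ) ^ (n + 1) / ((n + 1).factorial : ℝ) * Real.exp (-(x ^ 2 / θ))) / 2 := by
  set u : ℝ := x ^ 2 / θ with hudef
  have hu : 0 ≤ u := by positivity
  have hθ' : θ ≠ 0 := hθ.ne'
  have hx2 : x ^ 2 = θ * u := by rw [hudef]; field_simp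
  have hxe : x = Real.sqrt θ * Real.sqrt u := by
    rw [← Real.sqrt_mul hθ.le, ← hx2, Real.sqrt_sq hx]
  have hfac : (0:ℝ) < (n.factorial : ℝ) := Nat.cast_pos.2 n.factorial_pos
  have hn1 : (0:ℝ) < (n:ℝ) + 1 := by positivity
  set a : ℝ := Real.sqrt u with hadef
  set c : ℝ := Real.sqrt ((n:ℝ) + 1) with hcdef
  have ha : 0 ≤ a := Real.sqrt_nonneg u
  have hc : 0 < c := Real.sqrt_pos.2 hn1
  have ha2 : a ^ 2 = u := Real.sq_sqrt hu
  have hc2 : c ^ 2 = (n:ℝ) + 1 := Real.sq_sqrt hn1.le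
  have hspos : 0 < Real.sqrt θ := Real.sqrt_pos.2 hθ
  have hsq : Real.sqrt θ * Real.sqrt θ = θ := Real.mul_self_sqrt hθ.le
  -- rewrite the left factor
  have hxpow : x ^ (2 * n + 1) = θ ^ n * u ^ n * (Real.sqrt θ * a) := by
    rw [pow_succ, pow_mul, hx2, mul_pow, ← hxe]
  have hsplit : Real.sqrt (((n:ℕ) + 1 : ℝ) * θ) = c * Real.sqrt θ := by
    rw [Real.sqrt_mul hn1.le, hcdef]
  have hlhs : x ^ (2 * n + 1) / ((n.factorial : ℝ) * θ ^ n * Real.sqrt (((n:ℝ) + 1) * θ))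
      = u ^ n * a / ((n.factorial : ℝ) * c) := by
    rw [hxpow, hsplit]
    have hθn : (0:ℝ) < θ ^ n := pow_pos hθ n
    field_simp
  -- the core inequality
  have hcore : u ^ n * a / ((n.factorial : ℝ) * c)
      ≤ (u ^ n / (n.factorial : ℝ) + u ^ (n + 1) / (((n:ℝ) + 1) * (n.factorial : ℝ))) / 2 := by
    have hun : (0:ℝ) ≤ u ^ n := pow_nonneg hu n
    have hexp : u ^ (n + 1) = a ^ 2 * u ^ n := by rw [pow_succ, ha2]; ring
    have hid : (u ^ n / (n.factorial : ℝ) + u ^ (n + 1) / (((n:ℝ) + 1) * (n.factorial : ℝ))) / 2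
        - u ^ n * a / ((n.factorial : ℝ) * c)
        = u ^ n * (a - c) ^ 2 / (2 * c ^ 2 * (n.factorial : ℝ)) := by
      rw [hexp, ← hc2]
      field_simp
      ring
    have hpos : 0 ≤ u ^ n * (a - c) ^ 2 / (2 * c ^ 2 * (n.factorial : ℝ)) := by positivity
    linarith
  have hfs : ((n + 1).factorial : ℝ) = ((n:ℝ) + 1) * (n.factorial : ℝ) := by
    rw [Nat.factorial_succ]; push_cast; ring
  have hepos : 0 < Real.exp (-(x ^ 2 / θ)) := Real.exp_pos _
  have hmd : -x ^ 2 / θ = -(x ^ 2 / θ) := by ring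
  rw [hmd]
  have hcast : ((n:ℝ) + 1) = (((n:ℕ) + 1 : ℕ) : ℝ) := by push_cast; ring
  calc Real.exp (-(x ^ 2 / θ)) *
        (x ^ (2 * n + 1) / ((n.factorial : ℝ) * θ ^ n * Real.sqrt ((n + 1) * θ)))
      = Real.exp (-(x ^ 2 / θ)) * (u ^ n * a / ((n.factorial : ℝ) * c)) := by
        rw [hlhs]
    _ ≤ Real.exp (-(x ^ 2 / θ)) *
        ((u ^ n / (n.factorial : ℝ) + u ^ (n + 1) / (((n:ℝ) + 1) * (n.factorial : ℝ))) / 2) :=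
        mul_le_mul_of_nonneg_left hcore hepos.le
    _ = (u ^ n / (n.factorial : ℝ) * Real.exp (-(x ^ 2 / θ))
        + u ^ (n + 1) / (((n + 1).factorial : ℝ)) * Real.exp (-(x ^ 2 / θ))) / 2 := by
        rw [hfs]; ring

lemma vortex_summable (θ : ℝ) (hθ : 0 < θ) (x : ℝ) (hx : 0 ≤ x) :
    Summable (fun n : ℕ =>
      x ^ (2 * n + 1) / ((n.factorial : ℝ) * θ ^ n * Real.sqrt ((n + 1) * θ))) := by
  have hspos : 0 < Real.sqrt θ := Real.sqrt_pos.2 hθ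
  apply Summable.of_nonneg_of_le (f := fun n : ℕ => x / Real.sqrt θ * ((x ^ 2 / θ) ^ n / (n.factorial : ℝ)))
  · intro n; positivity
  · intro n
    have hn1 : (0:ℝ) < (n:ℝ) + 1 := by positivity
    have hsle : Real.sqrt θ ≤ Real.sqrt (((n:ℝ) + 1) * θ) := by
      apply Real.sqrt_le_sqrt
      nlinarith [(Nat.cast_nonneg n : (0:ℝ) ≤ (n:ℝ))]
    have hs2 : 0 < Real.sqrt (((n:ℝ) + 1) * θ) := lt_of_lt_of_le hspos hsle
    have hθn : (0:ℝ) < θ ^ n := pow_pos hθ n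
    have hfac : (0:ℝ) < (n.factorial : ℝ) := Nat.cast_pos.2 n.factorial_pos
    calc x ^ (2 * n + 1) / ((n.factorial : ℝ) * θ ^ n * Real.sqrt (((n:ℝ) + 1) * θ))
        ≤ x ^ (2 * n + 1) / ((n.factorial : ℝ) * θ ^ n * Real.sqrt θ) := by
          apply div_le_div_of_nonneg_left ?_ (by positivity) ?_
          · positivity
          · exact mul_le_mul_of_nonneg_left hsle (by positivity)
      _ = x / Real.sqrt θ * ((x ^ 2 / θ) ^ n / (n.factorial : ℝ)) := by
          rw [pow_succ, pow_mul, div_pow]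
          field_simp
  · exact (Real.summable_pow_div_factorial (x ^ 2 / θ)).mul_left _

lemma vortex_sum_le_one (θ : ℝ) (hθ : 0 < θ) (x : ℝ) (hx : 0 ≤ x) :
    Real.exp (-x ^ 2 / θ) * (∑' n : ℕ,
      x ^ (2 * n + 1) / ((n.factorial : ℝ) * θ ^ n * Real.sqrt ((n + 1) * θ))) ≤ 1 := by
  set u : ℝ := x ^ 2 / θ with hudef
  have hu : 0 ≤ u := by positivity
  set q : ℕ → ℝ := fun n => u ^ n / (n.factorial : ℝ) * Real.exp (-u) with hq
  have hq_sum : Summable q := (Real.summable_pow_div_factorial u).mul_right _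
  have hq_sum' : Summable (fun n => q (n + 1)) := (_root_.summable_nat_add_iff 1).2 hq_sum
  have hq_nonneg : ∀ n, 0 ≤ q n := fun n => by
    rw [hq]; positivity
  have hq_tsum : ∑' n, q n = 1 := by
    rw [hq, tsum_mul_right]
    have : ∑' n : ℕ, u ^ n / (n.factorial : ℝ) = Real.exp u := by
      rw [Real.exp_eq_exp_ℝ, NormedSpace.exp_eq_tsum_div]
    rw [this, ← Real.exp_add]
    simp
  have hq_tsum' : ∑' n, q (n + 1) ≤ 1 := by
    have h0 := Summable.tsum_eq_zero_add hq_sum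
    have := hq_nonneg 0
    rw [hq_tsum] at h0
    linarith
  have hts : Summable (fun n : ℕ =>
      Real.exp (-x ^ 2 / θ) * (x ^ (2 * n + 1) / ((n.factorial : ℝ) * θ ^ n * Real.sqrt ((n + 1) * θ)))) :=
    (vortex_summable θ hθ x hx).mul_left _
  calc Real.exp (-x ^ 2 / θ) * (∑' n : ℕ,
        x ^ (2 * n + 1) / ((n.factorial : ℝ) * θ ^ n * Real.sqrt ((n + 1) * θ)))
      = ∑' n : ℕ, Real.exp (-x ^ 2 / θ) *
        (x ^ (2 * n + 1) / ((n.factorial : ℝ) * θ ^ n * Real.sqrt ((n + 1) * θ))) := by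
        rw [tsum_mul_left]
    _ ≤ ∑' n : ℕ, (q n + q (n + 1)) / 2 := by
        apply Summable.tsum_le_tsum _ hts ((hq_sum.add hq_sum').div_const 2)
        intro n
        have h := vortex_term_bound θ hθ x hx n
        simpa [hq, hudef] using h
    _ = ((∑' n, q n) + ∑' n, q (n + 1)) / 2 := by
        rw [tsum_div_const, Summable.tsum_add hq_sum hq_sum']
    _ ≤ 1 := by rw [hq_tsum]; linarith

end VortexAux

/-- For `θ > 0` and `f(x) = Σ_{n≥0} x^{2n+1}/(n! θ^n √((n+1)θ))`, the modulus
`e^{-x²/θ} f(x)` of the Fock-space noncommutative vortex solution satisfies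
`e^{-x²/θ} f(x) ≤ ∫₀^∞ (√θ/t²)(1 - e^{-t²/θ}) dt` for all `x ≥ 0`; in particular
it is bounded on `[0, ∞)`. -/

theorem fock_vortex_solution_bounded (θ : ℝ) (hθ : 0 < θ)
    (f : ℝ → ℝ)
    (hf : f = fun x => ∑' n : ℕ,
      x ^ (2 * n + 1) / ((n.factorial : ℝ) * θ ^ n * Real.sqrt ((n + 1) * θ))) :
    (∀ x : ℝ, 0 ≤ x →
      Real.exp (-x ^ 2 / θ) * f x ≤
        ∫ t in Set.Ioi (0 : ℝ), (Real.sqrt θ / t ^ 2) * (1 - Real.exp (-t ^ 2 / θ))) ∧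
    ∃ M : ℝ, ∀ x : ℝ, 0 ≤ x → |Real.exp (-x ^ 2 / θ) * f x| ≤ M := by
  subst hf
  have hmain : ∀ x : ℝ, 0 ≤ x →
      Real.exp (-x ^ 2 / θ) * (∑' n : ℕ,
        x ^ (2 * n + 1) / ((n.factorial : ℝ) * θ ^ n * Real.sqrt ((n + 1) * θ))) ≤
        ∫ t in Set.Ioi (0 : ℝ), (Real.sqrt θ / t ^ 2) * (1 - Real.exp (-t ^ 2 / θ)) := by
    intro x hx
    exact le_trans (vortex_sum_le_one θ hθ x hx) (vortex_integral_ge_one θ hθ)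
  refine ⟨hmain, ⟨∫ t in Set.Ioi (0 : ℝ), (Real.sqrt θ / t ^ 2) * (1 - Real.exp (-t ^ 2 / θ)),
    fun x hx => ?_⟩⟩
  have hnonneg : 0 ≤ Real.exp (-x ^ 2 / θ) * (∑' n : ℕ,
      x ^ (2 * n + 1) / ((n.factorial : ℝ) * θ ^ n * Real.sqrt ((n + 1) * θ))) := by
    apply mul_nonneg (Real.exp_pos _).le
    apply tsum_nonneg
    intro n
    have : (0:ℝ) < (n.factorial : ℝ) := Nat.cast_pos.2 n.factorial_pos
    positivity
  rw [abs_of_nonneg hnonneg]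
  exact hmain x hx
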